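/- Let p ≥ 1, let Λ ⊂ ℤ² be finite with boundary condition φ, let γ be a contour with Λ_γ ⊆ Λ, let h ∈ ℤ, and let η ∈ ℤ^Λ satisfy the h-contour event C_{γ,h}. Define T_γη by (T_γη)_v = η_v − 1 for v ∈ Λ_γ and (T_γη)_v = η_v otherwise. Then H^{p,φ}_Λ(T_γη) ≤ H^{p,φ}_Λ(η) − |γ|. -/

import Mathlib

open scoped BigOperators Classical

noncomputable section

namespace PSOS

/-- Sites of the square lattice `ℤ²`. -/
abbrev Site : Type := ℤ × ℤ

/-- The nearest-neighbour edges incident to `x`, each written in its normalized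
(right/up oriented) form, so that every unordered pair appears in a unique way. -/
def edgesAt (x : Site) : Finset (Site × Site) :=
  {(x, (x.1 + 1, x.2)), (x, (x.1, x.2 + 1)),
   ((x.1 - 1, x.2), x), ((x.1, x.2 - 1), x)}

/-- Nearest-neighbour edges of `ℤ²` with at least one endpoint in `Λ`,
each unordered pair appearing exactly once. -/
def edges (Λ : Finset Site) : Finset (Site × Site) := Λ.biUnion edgesAt

/-- Extension `ξ` of a configuration `η : Λ → ℤ` by the boundary condition `φ` off `Λ`. -/
def extend (Λ : Finset Site) (φ : Site → ℤ) (η : Λ → ℤ) : Site → ℤ :=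
  fun x => if h : x ∈ Λ then η ⟨x, h⟩ else φ x

/-- The `p`-SOS Hamiltonian `H^{p,φ}_Λ` on `Λ` with boundary condition `φ`. -/
def ham (p : ℝ) (Λ : Finset Site) (φ : Site → ℤ) (η : Λ → ℤ) : ℝ :=
  ∑ e ∈ edges Λ, (|extend Λ φ η e.1 - extend Λ φ η e.2| : ℝ) ^ p

/-- Boltzmann weight `exp(-β H^{p,φ}_Λ(η))`. -/
def weight (p β : ℝ) (Λ : Finset Site) (φ : Site → ℤ) (η : Λ → ℤ) : ℝ :=
  Real.exp (-β * ham p Λ φ η)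

/-- Finite-volume Gibbs probability `hatπ^{p,φ}_Λ(A)` of an event `A ⊆ ℤ^Λ`. -/
def gibbs (p β : ℝ) (Λ : Finset Site) (φ : Site → ℤ) (A : Set (Λ → ℤ)) : ℝ :=
  (∑' η : A, weight p β Λ φ η) / (∑' η : (Λ → ℤ), weight p β Λ φ η)

/-- Gibbs expectation of an observable under `hatπ^{p,φ}_Λ`. -/
def gibbsExp (p β : ℝ) (Λ : Finset Site) (φ : Site → ℤ) (f : (Λ → ℤ) → ℝ) : ℝ :=
  (∑' η : (Λ → ℤ), f η * weight p β Λ φ η) / (∑' η : (Λ → ℤ), weight p β Λ φ η)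

/-- The floor event `{η : η_x ≥ 0 for all x ∈ Λ}`. -/
def floorSet (Λ : Finset Site) : Set (Λ → ℤ) := {η | ∀ x, 0 ≤ η x}

/-- The event `{η : 0 ≤ η_x ≤ n for all x ∈ Λ}` (floor at `0`, ceiling at `n`). -/
def boxSet (Λ : Finset Site) (n : ℕ) : Set (Λ → ℤ) :=
  {η | ∀ x, 0 ≤ η x ∧ η x ≤ (n : ℤ)}

/-- `barπ^{p,0}_Λ`: the Gibbs measure with zero boundary condition conditioned
on the floor event. -/
def barGibbs (p β : ℝ) (Λ : Finset Site) (A : Set (Λ → ℤ)) : ℝ :=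
  gibbs p β Λ 0 (A ∩ floorSet Λ) / gibbs p β Λ 0 (floorSet Λ)

/-- `π^{p,0}_Λ`: the Gibbs measure with zero boundary condition conditioned on
having floor at `0` and ceiling at `n`. -/
def ceilGibbs (p β : ℝ) (Λ : Finset Site) (n : ℕ) (A : Set (Λ → ℤ)) : ℝ :=
  gibbs p β Λ 0 (A ∩ boxSet Λ n) / gibbs p β Λ 0 (boxSet Λ n)

/-- The nearest-neighbour graph on `ℤ²`. -/
def nbrGraph : SimpleGraph Site where
  Adj x y := (x.1 - y.1).natAbs + (x.2 - y.2).natAbs = 1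
  symm := by constructor; intro x y hxy; (try simp only at hxy ⊢); omega
  loopless := by constructor; intro x h; (try simp only at h); omega

/-- The four nearest neighbours of a site. -/
def nbrs (x : Site) : Finset Site :=
  {(x.1 + 1, x.2), (x.1 - 1, x.2), (x.1, x.2 + 1), (x.1, x.2 - 1)}

/-- A contour `γ` of the dual lattice `(ℤ²)*`, identified with the finite region
`Λ_γ ⊆ ℤ²` of sites it encloses: the region is nonempty and connected with
connected complement, so that its edge boundary is a single closed dual circuit
(consistently with the standard linking rule at dual vertices). -/
structure Contour where
  interior : Finset Site
  nonempty : interior.Nonempty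
  conn : (nbrGraph.induce (interior : Set Site)).Connected
  coconn : (nbrGraph.induce ((interior : Set Site)ᶜ)).Connected

/-- The nearest-neighbour edges crossing the boundary of `S`, oriented from
inside to outside; these correspond to the bonds of the dual circuit bounding `S`. -/
def bdryEdges (S : Finset Site) : Finset (Site × Site) :=
  S.biUnion fun x => ((nbrs x).filter fun y => y ∉ S).image fun y => (x, y)

/-- `|γ|`: the number of bonds of the contour `γ`. -/
def Contour.len (γ : Contour) : ℕ := (bdryEdges γ.interior).card

/-- `∂⁺_γ`: sites of the interior adjacent to the exterior. -/
def innerBdry (S : Finset Site) : Finset Site :=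
  S.filter fun x => ∃ y ∈ nbrs x, y ∉ S

/-- `∂⁻_γ`: sites of the exterior adjacent to the interior. -/
def outerBdry (S : Finset Site) : Finset Site :=
  (S.biUnion nbrs).filter fun y => y ∉ S

/-- The event `C_{γ,h}` that `γ` is an `h`-contour: the extended configuration `ξ`
is at least `h` on `∂⁺_γ` and at most `h - 1` on `∂⁻_γ`. -/
def contourEvent (Λ : Finset Site) (φ : Site → ℤ) (γ : Contour) (h : ℤ) :
    Set (Λ → ℤ) :=
  {η | (∀ x ∈ innerBdry γ.interior, h ≤ extend Λ φ η x) ∧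
       (∀ y ∈ outerBdry γ.interior, extend Λ φ η y ≤ h - 1)}

/-- The map `T_γ` lowering the configuration by `1` inside the contour `γ`. -/
def lower (Λ : Finset Site) (γ : Contour) (η : Λ → ℤ) : Λ → ℤ :=
  fun x => if (x : Site) ∈ γ.interior then η x - 1 else η x

/-- An event is increasing if it is upward closed for the pointwise order. -/
def IncrEvent (Λ : Finset Site) (E : Set (Λ → ℤ)) : Prop :=
  ∀ η η' : Λ → ℤ, (∀ x, η x ≤ η' x) → η ∈ E → η' ∈ E



/-! ### Auxiliary lemmas for `statement_3` -/

/-- Normal (right/up oriented) form of an edge. -/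
def MyIsNorm (e : Site × Site) : Prop :=
  e.2 = (e.1.1 + 1, e.1.2) ∨ e.2 = (e.1.1, e.1.2 + 1)

lemma my_mem_nbrs {x y : Site} :
    y ∈ nbrs x ↔ (y = (x.1 + 1, x.2) ∨ y = (x.1 - 1, x.2) ∨
      y = (x.1, x.2 + 1) ∨ y = (x.1, x.2 - 1)) := by
  simp [nbrs]

lemma my_mem_edges {Λ : Finset Site} {e : Site × Site} :
    e ∈ edges Λ ↔ (e.1 ∈ Λ ∨ e.2 ∈ Λ) ∧ MyIsNorm e := by
  obtain ⟨⟨a, b⟩, c, d⟩ := e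
  constructor
  · intro he
    simp only [edges, Finset.mem_biUnion] at he
    obtain ⟨x, hx, hex⟩ := he
    simp only [edgesAt, Finset.mem_insert, Finset.mem_singleton, Prod.ext_iff] at hex
    obtain ⟨u, v⟩ := x
    simp only [MyIsNorm, Prod.ext_iff]
    rcases hex with ⟨⟨h1, h2⟩, h3, h4⟩ | ⟨⟨h1, h2⟩, h3, h4⟩ | ⟨⟨h1, h2⟩, h3, h4⟩ |
        ⟨⟨h1, h2⟩, h3, h4⟩ <;> simp at * <;> subst_vars <;>
      first
        | exact ⟨Or.inl hx, by omega⟩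
        | exact ⟨Or.inr hx, by omega⟩
  · rintro ⟨hΛ, hn⟩
    simp only [edges, Finset.mem_biUnion]
    simp only [MyIsNorm, Prod.ext_iff] at hn
    rcases hΛ with h | h
    · refine ⟨(a, b), h, ?_⟩
      simp only [edgesAt, Finset.mem_insert, Finset.mem_singleton, Prod.ext_iff]
      simp
      omega
    · refine ⟨(c, d), h, ?_⟩
      simp only [edgesAt, Finset.mem_insert, Finset.mem_singleton, Prod.ext_iff]
      simp
      omega

lemma my_norm_adj {e : Site × Site} (h : MyIsNorm e) :
    e.2 ∈ nbrs e.1 ∧ e.1 ∈ nbrs e.2 := by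
  obtain ⟨⟨a, b⟩, c, d⟩ := e
  simp only [MyIsNorm, Prod.ext_iff] at h
  constructor <;> rw [my_mem_nbrs] <;> simp at * <;> omega

lemma my_not_norm_swap {e : Site × Site} (h : MyIsNorm e) : ¬ MyIsNorm (e.2, e.1) := by
  obtain ⟨⟨a, b⟩, c, d⟩ := e
  simp only [MyIsNorm, Prod.ext_iff] at *
  omega

lemma my_norm_swap {e : Site × Site} (hadj : e.2 ∈ nbrs e.1) (h : ¬ MyIsNorm e) :
    MyIsNorm (e.2, e.1) := by
  obtain ⟨⟨a, b⟩, c, d⟩ := e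
  rw [my_mem_nbrs] at hadj
  simp only [MyIsNorm, Prod.ext_iff] at *
  omega

lemma my_mem_bdryEdges {S : Finset Site} {e : Site × Site} :
    e ∈ bdryEdges S ↔ e.1 ∈ S ∧ e.2 ∈ nbrs e.1 ∧ e.2 ∉ S := by
  simp only [bdryEdges, Finset.mem_biUnion, Finset.mem_image, Finset.mem_filter]
  constructor
  · rintro ⟨x, hx, y, ⟨hy, hyS⟩, rfl⟩; exact ⟨hx, hy, hyS⟩
  · rintro ⟨h1, h2, h3⟩; exact ⟨e.1, h1, e.2, ⟨h2, h3⟩, rfl⟩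

lemma my_rpow_key {p : ℝ} (hp : 1 ≤ p) {x : ℝ} (hx : 0 ≤ x) :
    x ^ p + 1 ≤ (x + 1) ^ p := by
  have hle := NNReal.add_rpow_le_rpow_add x.toNNReal 1 hp
  have h2 := (NNReal.coe_le_coe).2 hle
  simpa [NNReal.coe_rpow, Real.coe_toNNReal x hx] using h2

lemma my_int_key {p : ℝ} (hp : 1 ≤ p) {a b : ℤ} (hab : 1 ≤ a - b) :
    |(a : ℝ) - 1 - b| ^ p ≤ |(a : ℝ) - b| ^ p - 1 := by
  have h1 : (1 : ℝ) ≤ (a : ℝ) - b := by exact_mod_cast hab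
  rw [abs_of_nonneg (by linarith), abs_of_nonneg (by linarith)]
  have h2 := my_rpow_key hp (x := (a : ℝ) - 1 - b) (by linarith)
  have h3 : (a : ℝ) - 1 - b + 1 = (a : ℝ) - b := by ring
  rw [h3] at h2
  linarith

lemma my_extend_lower (Λ : Finset Site) (φ : Site → ℤ) (γ : Contour)
    (hγ : γ.interior ⊆ Λ) (η : Λ → ℤ) (x : Site) :
    extend Λ φ (lower Λ γ η) x
      = extend Λ φ η x - (if x ∈ γ.interior then 1 else 0) := by
  simp only [extend, lower]
  by_cases hx : x ∈ Λ
  · simp only [dif_pos hx]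
    split_ifs <;> simp
  · have hxI : x ∉ γ.interior := fun hh => hx (hγ hh)
    simp [dif_neg hx, hxI]

/-- if `γ` is an `h`-contour of `η` (with `Λ_γ ⊆ Λ`), then lowering
the configuration by `1` inside `γ` decreases the Hamiltonian by at least `|γ|`:
`H^{p,φ}_Λ(T_γ η) ≤ H^{p,φ}_Λ(η) - |γ|`. -/
theorem statement_3 (p : ℝ) (hp : 1 ≤ p) (Λ : Finset Site) (φ : Site → ℤ)
    (γ : Contour) (hγ : γ.interior ⊆ Λ) (h : ℤ) (η : Λ → ℤ)
    (hη : η ∈ contourEvent Λ φ γ h) :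
    ham p Λ φ (lower Λ γ η) ≤ ham p Λ φ η - (γ.len : ℝ) := by
  classical
  obtain ⟨hin, hout⟩ := hη
  set I := γ.interior with hIdef
  have hext : ∀ x : Site, extend Λ φ (lower Λ γ η) x
      = extend Λ φ η x - (if x ∈ I then 1 else 0) :=
    my_extend_lower Λ φ γ hγ η
  set cross : Finset (Site × Site) :=
    (edges Λ).filter (fun e => (e.1 ∈ I ∧ e.2 ∉ I) ∨ (e.1 ∉ I ∧ e.2 ∈ I)) with hcdef
  have hsub : cross ⊆ edges Λ := Finset.filter_subset _ _
  -- the per-edge bound on crossing edges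
  have hbound : ∀ e ∈ cross,
      (|extend Λ φ (lower Λ γ η) e.1 - extend Λ φ (lower Λ γ η) e.2| : ℝ) ^ p
        ≤ (|extend Λ φ η e.1 - extend Λ φ η e.2| : ℝ) ^ p - 1 := by
    intro e he
    rw [hcdef, Finset.mem_filter] at he
    obtain ⟨heE, hcr⟩ := he
    have hnorm := (my_mem_edges.1 heE).2
    obtain ⟨hadj1, hadj2⟩ := my_norm_adj hnorm
    rw [hext e.1, hext e.2]
    rcases hcr with ⟨h1, h2⟩ | ⟨h1, h2⟩
    · have hi : e.1 ∈ innerBdry I := by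
        rw [innerBdry, Finset.mem_filter]
        exact ⟨h1, e.2, hadj1, h2⟩
      have ho : e.2 ∈ outerBdry I := by
        rw [outerBdry, Finset.mem_filter]
        exact ⟨Finset.mem_biUnion.2 ⟨e.1, h1, hadj1⟩, h2⟩
      have ha : h ≤ extend Λ φ η e.1 := hin _ hi
      have hb : extend Λ φ η e.2 ≤ h - 1 := hout _ ho
      rw [if_pos h1, if_neg h2]
      have key := my_int_key hp (a := extend Λ φ η e.1) (b := extend Λ φ η e.2)
        (by omega)
      push_cast
      push_cast at key
      convert key using 3 <;> ring
    · have hi : e.2 ∈ innerBdry I := by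
        rw [innerBdry, Finset.mem_filter]
        exact ⟨h2, e.1, hadj2, h1⟩
      have ho : e.1 ∈ outerBdry I := by
        rw [outerBdry, Finset.mem_filter]
        exact ⟨Finset.mem_biUnion.2 ⟨e.2, h2, hadj2⟩, h1⟩
      have ha : h ≤ extend Λ φ η e.2 := hin _ hi
      have hb : extend Λ φ η e.1 ≤ h - 1 := hout _ ho
      rw [if_pos h2, if_neg h1]
      have key := my_int_key hp (a := extend Λ φ η e.2) (b := extend Λ φ η e.1)
        (by omega)
      push_cast
      push_cast at key
      rw [abs_sub_comm, abs_sub_comm ((extend Λ φ η e.1 : ℝ)) ((extend Λ φ η e.2 : ℝ))]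
      convert key using 3 <;> ring
  -- equality on non-crossing edges
  have hequal : ∀ e ∈ edges Λ, e ∉ cross →
      (|extend Λ φ (lower Λ γ η) e.1 - extend Λ φ (lower Λ γ η) e.2| : ℝ) ^ p
        = (|extend Λ φ η e.1 - extend Λ φ η e.2| : ℝ) ^ p := by
    intro e he hne
    rw [hcdef, Finset.mem_filter] at hne
    have hcc : ¬ ((e.1 ∈ I ∧ e.2 ∉ I) ∨ (e.1 ∉ I ∧ e.2 ∈ I)) := fun hc => hne ⟨he, hc⟩
    rw [hext e.1, hext e.2]
    by_cases h1 : e.1 ∈ I <;> by_cases h2 : e.2 ∈ I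
    · rw [if_pos h1, if_pos h2]; congr 1; push_cast; ring_nf
    · exact absurd (Or.inl ⟨h1, h2⟩) hcc
    · exact absurd (Or.inr ⟨h1, h2⟩) hcc
    · rw [if_neg h1, if_neg h2]; congr 1; push_cast; ring_nf
  -- the length of the contour equals the number of crossing edges
  have hcard : γ.len = cross.card := by
    show (bdryEdges I).card = cross.card
    refine Finset.card_nbij' (fun e => if MyIsNorm e then e else (e.2, e.1))
      (fun e => if e.1 ∈ I then e else (e.2, e.1)) ?_ ?_ ?_ ?_
    · intro e he
      beta_reduce
      rw [Finset.mem_coe] at he ⊢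
      rw [my_mem_bdryEdges] at he
      obtain ⟨h1, h2, h3⟩ := he
      by_cases hn : MyIsNorm e
      · rw [if_pos hn, hcdef, Finset.mem_filter]
        exact ⟨my_mem_edges.2 ⟨Or.inl (hγ h1), hn⟩, Or.inl ⟨h1, h3⟩⟩
      · rw [if_neg hn, hcdef, Finset.mem_filter]
        exact ⟨my_mem_edges.2 ⟨Or.inr (hγ h1), my_norm_swap h2 hn⟩, Or.inr ⟨h3, h1⟩⟩
    · intro e he
      beta_reduce
      rw [Finset.mem_coe] at he ⊢
      rw [hcdef, Finset.mem_filter] at he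
      obtain ⟨heE, hcr⟩ := he
      obtain ⟨hadj1, hadj2⟩ := my_norm_adj (my_mem_edges.1 heE).2
      rcases hcr with ⟨h1, h2⟩ | ⟨h1, h2⟩
      · rw [if_pos h1, my_mem_bdryEdges]; exact ⟨h1, hadj1, h2⟩
      · rw [if_neg h1, my_mem_bdryEdges]; exact ⟨h2, hadj2, h1⟩
    · intro e he
      beta_reduce
      rw [Finset.mem_coe] at he
      rw [my_mem_bdryEdges] at he
      obtain ⟨h1, h2, h3⟩ := he
      by_cases hn : MyIsNorm e
      · rw [if_pos hn]
        beta_reduce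
        rw [if_pos h1]
      · rw [if_neg hn]
        beta_reduce
        simp [h3]
    · intro e he
      beta_reduce
      rw [Finset.mem_coe] at he
      rw [hcdef, Finset.mem_filter] at he
      obtain ⟨heE, hcr⟩ := he
      have hnorm := (my_mem_edges.1 heE).2
      by_cases h1 : e.1 ∈ I
      · rw [if_pos h1]
        beta_reduce
        rw [if_pos hnorm]
      · rw [if_neg h1]
        beta_reduce
        rw [if_neg (my_not_norm_swap hnorm)]
  -- put everything together
  rw [ham, ham, ← Finset.sum_sdiff hsub, ← Finset.sum_sdiff hsub, hcard]
  have e1 : ∑ e ∈ edges Λ \ cross,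
        (|extend Λ φ (lower Λ γ η) e.1 - extend Λ φ (lower Λ γ η) e.2| : ℝ) ^ p
      = ∑ e ∈ edges Λ \ cross,
        (|extend Λ φ η e.1 - extend Λ φ η e.2| : ℝ) ^ p :=
    Finset.sum_congr rfl fun e he =>
      hequal e (Finset.mem_sdiff.1 he).1 (Finset.mem_sdiff.1 he).2
  have e2 : ∑ e ∈ cross,
        (|extend Λ φ (lower Λ γ η) e.1 - extend Λ φ (lower Λ γ η) e.2| : ℝ) ^ p
      ≤ ∑ e ∈ cross, (|extend Λ φ η e.1 - extend Λ φ η e.2| : ℝ) ^ p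
          - cross.card := by
    have hs := Finset.sum_le_sum hbound
    rw [Finset.sum_sub_distrib] at hs
    simpa using hs
  linarith

end PSOS
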